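/- Let σ : ℝ → ℝ be μ-Lipschitz with σ(0) = 0, and for a matrix X let σ.(X) denote entrywise application of σ. Then for all real matrices W, W' of size m×n and A, A' of size n×p, ‖σ.(W·A) − σ.(W'·A')‖_F ≤ μ·( ‖W‖₂·‖A − A'‖_F + ‖W − W'‖_F·‖A'‖_F ). -/

import Mathlib

open Matrix
open scoped Matrix.Norms.L2Operator

/-- The Frobenius norm of a real matrix. -/
noncomputable def frobNorm {k l : ℕ} (M : Matrix (Fin k) (Fin l) ℝ) : ℝ :=
  Real.sqrt (∑ i, ∑ j, (M i j) ^ 2)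

lemma frobNorm_nonneg {k l : ℕ} (M : Matrix (Fin k) (Fin l) ℝ) : 0 ≤ frobNorm M :=
  Real.sqrt_nonneg _

lemma sum_sq_nonneg {k l : ℕ} (M : Matrix (Fin k) (Fin l) ℝ) :
    0 ≤ ∑ i, ∑ j, (M i j) ^ 2 :=
  Finset.sum_nonneg fun _ _ => Finset.sum_nonneg fun _ _ => sq_nonneg _

lemma sq_frobNorm {k l : ℕ} (M : Matrix (Fin k) (Fin l) ℝ) :
    frobNorm M ^ 2 = ∑ i, ∑ j, (M i j) ^ 2 :=
  Real.sq_sqrt (sum_sq_nonneg M)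

/-- Bridge to the mathlib Frobenius norm. -/
lemma frobNorm_eq_frobenius {k l : ℕ} (M : Matrix (Fin k) (Fin l) ℝ) :
    frobNorm M = @norm _ (Matrix.frobeniusSeminormedAddCommGroup).toNorm M := by
  rw [Matrix.frobenius_norm_def, ← Real.sqrt_eq_rpow, frobNorm]
  congr 1
  refine Finset.sum_congr rfl fun i _ => Finset.sum_congr rfl fun j _ => ?_
  rw [Real.rpow_two, Real.norm_eq_abs, sq_abs]

lemma frobNorm_mono {k l : ℕ} (X Y : Matrix (Fin k) (Fin l) ℝ)
    (h : ∀ i j, |X i j| ≤ |Y i j|) : frobNorm X ≤ frobNorm Y := by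
  apply Real.sqrt_le_sqrt
  refine Finset.sum_le_sum fun i _ => Finset.sum_le_sum fun j _ => ?_
  rw [← sq_abs (X i j), ← sq_abs (Y i j)]
  exact pow_le_pow_left₀ (abs_nonneg _) (h i j) 2

lemma frobNorm_smul {k l : ℕ} (c : ℝ) (M : Matrix (Fin k) (Fin l) ℝ) :
    frobNorm (c • M) = |c| * frobNorm M := by
  unfold frobNorm
  have : ∑ i, ∑ j, ((c • M) i j) ^ 2 = c ^ 2 * ∑ i, ∑ j, (M i j) ^ 2 := by
    simp [Finset.mul_sum, mul_pow]
  rw [this, Real.sqrt_mul (sq_nonneg c), Real.sqrt_sq_eq_abs]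

lemma frobNorm_add_le {k l : ℕ} (X Y : Matrix (Fin k) (Fin l) ℝ) :
    frobNorm (X + Y) ≤ frobNorm X + frobNorm Y := by
  rw [frobNorm_eq_frobenius, frobNorm_eq_frobenius, frobNorm_eq_frobenius]
  exact @norm_add_le _ (Matrix.frobeniusSeminormedAddCommGroup).toSeminormedAddGroup X Y

lemma frobNorm_mul_le {k l r : ℕ} (X : Matrix (Fin k) (Fin l) ℝ)
    (Y : Matrix (Fin l) (Fin r) ℝ) : frobNorm (X * Y) ≤ frobNorm X * frobNorm Y := by
  rw [frobNorm_eq_frobenius, frobNorm_eq_frobenius, frobNorm_eq_frobenius]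
  exact Matrix.frobenius_norm_mul X Y

/-- Spectral norm times Frobenius norm bound. -/
lemma frobNorm_op_mul_le {k l r : ℕ} (X : Matrix (Fin k) (Fin l) ℝ)
    (Y : Matrix (Fin l) (Fin r) ℝ) : frobNorm (X * Y) ≤ ‖X‖ * frobNorm Y := by
  have hXn : (0 : ℝ) ≤ ‖X‖ := norm_nonneg _
  have hsq : frobNorm (X * Y) ^ 2 ≤ (‖X‖ * frobNorm Y) ^ 2 := by
    have e1 : frobNorm (X * Y) ^ 2 = ∑ j, ∑ i, ((X * Y) i j) ^ 2 := by
      rw [sq_frobNorm]; exact Finset.sum_comm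
    have e2 : frobNorm Y ^ 2 = ∑ j, ∑ i, (Y i j) ^ 2 := by
      rw [sq_frobNorm]; exact Finset.sum_comm
    rw [e1, mul_pow, e2, Finset.mul_sum]
    refine Finset.sum_le_sum fun j _ => ?_
    have hcol : ∑ i, ((X * Y) i j) ^ 2 =
        ‖(EuclideanSpace.equiv (Fin k) ℝ).symm (X *ᵥ fun t => Y t j)‖ ^ 2 := by
      rw [EuclideanSpace.norm_eq, Real.sq_sqrt (Finset.sum_nonneg fun _ _ => sq_nonneg _)]
      simp [Matrix.mul_apply, Matrix.mulVec, dotProduct, sq_abs]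
    have hcol' : ∑ i, (Y i j) ^ 2 =
        ‖(EuclideanSpace.equiv (Fin l) ℝ).symm (fun t => Y t j)‖ ^ 2 := by
      rw [EuclideanSpace.norm_eq, Real.sq_sqrt (Finset.sum_nonneg fun _ _ => sq_nonneg _)]
      simp [sq_abs]
    rw [hcol, hcol', ← mul_pow]
    have := Matrix.l2_opNorm_mulVec X ((EuclideanSpace.equiv (Fin l) ℝ).symm (fun t => Y t j))
    exact pow_le_pow_left₀ (norm_nonneg _) this 2
  have h1 : 0 ≤ frobNorm (X * Y) := frobNorm_nonneg _
  have h2 : (0 : ℝ) ≤ ‖X‖ * frobNorm Y := mul_nonneg hXn (frobNorm_nonneg _)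
  nlinarith

/-- inductive step of Lemma 9.3: one-layer perturbation
inequality.  Here `‖W‖` denotes the spectral norm (ℓ²→ℓ² operator norm) and
`frobNorm` the Frobenius norm. -/
theorem stmt13 (μ : ℝ) (hμ : 0 ≤ μ) (σ : ℝ → ℝ)
    (hσ : ∀ x y : ℝ, |σ x - σ y| ≤ μ * |x - y|) (hσ0 : σ 0 = 0)
    (m n p : ℕ) (W W' : Matrix (Fin m) (Fin n) ℝ)
    (A A' : Matrix (Fin n) (Fin p) ℝ) :
    frobNorm ((W * A).map σ - (W' * A').map σ)
      ≤ μ * (‖W‖ * frobNorm (A - A') + frobNorm (W - W') * frobNorm A') := by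
  set X : Matrix (Fin m) (Fin p) ℝ := W * A - W' * A' with hX
  have step1 : frobNorm ((W * A).map σ - (W' * A').map σ) ≤ μ * frobNorm X := by
    have h := frobNorm_mono ((W * A).map σ - (W' * A').map σ) (μ • X) ?_
    · calc frobNorm ((W * A).map σ - (W' * A').map σ) ≤ frobNorm (μ • X) := h
        _ = μ * frobNorm X := by rw [frobNorm_smul, abs_of_nonneg hμ]
    · intro i j
      have := hσ ((W * A) i j) ((W' * A') i j)
      simpa [Matrix.sub_apply, Matrix.map_apply, hX, abs_mul, abs_of_nonneg hμ] using this
  have hdecomp : X = W * (A - A') + (W - W') * A' := by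
    rw [hX, Matrix.mul_sub, Matrix.sub_mul]; abel
  have step2 : frobNorm X ≤ ‖W‖ * frobNorm (A - A') + frobNorm (W - W') * frobNorm A' := by
    rw [hdecomp]
    calc frobNorm (W * (A - A') + (W - W') * A')
        ≤ frobNorm (W * (A - A')) + frobNorm ((W - W') * A') := frobNorm_add_le _ _
      _ ≤ ‖W‖ * frobNorm (A - A') + frobNorm (W - W') * frobNorm A' :=
          add_le_add (frobNorm_op_mul_le _ _) (frobNorm_mul_le _ _)
  calc frobNorm ((W * A).map σ - (W' * A').map σ) ≤ μ * frobNorm X := step1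
    _ ≤ μ * (‖W‖ * frobNorm (A - A') + frobNorm (W - W') * frobNorm A') :=
        mul_le_mul_of_nonneg_left step2 hμ
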